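/- For every V > 0, every vector w ∈ ℝ², every function f : ℝ² → ℝ², and every initial position p₀ ∈ ℝ², define the sequence p : ℕ → ℝ² by p_{n+1} = p_n + w if 2‖p_n‖ > V, and p_{n+1} = p_n + f(−2 p_n) otherwise. Then there exists a point q ∈ ℝ² such that for every n ∈ ℕ, dist(q, p_n) > V and dist(q, −p_n) > V. Hence two oblivious identical robots with limited visibility cannot explore the plane, even under a synchronous rigid scheduler. -/

import Mathlib

lemma exists_unit_perp (w : EuclideanSpace ℝ (Fin 2)) :
    ∃ u : EuclideanSpace ℝ (Fin 2), ‖u‖ = 1 ∧ (inner ℝ u w : ℝ) = 0 := by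
  by_cases hw : w = 0
  · refine ⟨(WithLp.equiv 2 (Fin 2 → ℝ)).symm ![1, 0], ?_, ?_⟩
    · simp [EuclideanSpace.norm_eq, Fin.sum_univ_two]
    · simp [hw]
  · set v : EuclideanSpace ℝ (Fin 2) := (WithLp.equiv 2 (Fin 2 → ℝ)).symm ![-w 1, w 0] with hv
    have hvn : ‖v‖ = ‖w‖ := by
      simp [hv, EuclideanSpace.norm_eq, Fin.sum_univ_two]
      ring_nf
    have hv0 : v ≠ 0 := by
      intro h
      apply hw
      have : ‖w‖ = 0 := by rw [← hvn, h, norm_zero]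
      exact norm_eq_zero.mp this
    refine ⟨‖v‖⁻¹ • v, ?_, ?_⟩
    · rw [norm_smul]
      simp [norm_ne_zero_iff.mpr hv0]
    · rw [real_inner_smul_left]
      have : (inner ℝ v w : ℝ) = 0 := by
        simp [hv, PiLp.inner_apply, Fin.sum_univ_two]
        ring
      rw [this, mul_zero]



/-- Two-robot case of Theorem 5: two oblivious identical robots with limited
visibility, placed symmetrically with 180°-rotated frames, cannot explore the
plane even under a synchronous rigid scheduler. The positions are `p n` and
`-(p n)`; a robot sees the other iff `2‖p n‖ ≤ V`; `w` is the move when alone,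
`f` the move as a function of the other robot's relative position `-2 • p n`. -/
theorem turingmobile_two_robots_cannot_explore
    (V : ℝ) (hV : 0 < V)
    (w : EuclideanSpace ℝ (Fin 2))
    (f : EuclideanSpace ℝ (Fin 2) → EuclideanSpace ℝ (Fin 2))
    (p₀ : EuclideanSpace ℝ (Fin 2))
    (p : ℕ → EuclideanSpace ℝ (Fin 2))
    (hp0 : p 0 = p₀)
    (hstep : ∀ n : ℕ,
      p (n + 1) = if V < 2 * ‖p n‖ then p n + w else p n + f (-((2 : ℝ) • p n))) :
    ∃ q : EuclideanSpace ℝ (Fin 2),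
      ∀ n : ℕ, V < dist q (p n) ∧ V < dist q (-(p n)) := by
  classical
  obtain ⟨u, hu1, huw⟩ := exists_unit_perp w
  -- the u-coordinate is invariant along "far" runs
  have inv : ∀ d n : ℕ, (∀ k, k < d → V < 2 * ‖p (n + k)‖) →
      (inner ℝ u (p (n + d)) : ℝ) = inner ℝ u (p n) := by
    intro d
    induction d with
    | zero => intro n _; rfl
    | succ d ih =>
      intro n h
      have h1 : (inner ℝ u (p (n + d + 1)) : ℝ) = inner ℝ u (p (n + d)) := by
        rw [hstep (n + d), if_pos (h d (Nat.lt_succ_self d)), inner_add_right, huw, add_zero]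
      have h2 := ih n (fun k hk => h k (hk.trans (Nat.lt_succ_self d)))
      rw [show n + (d + 1) = n + d + 1 from rfl, h1, h2]
  -- the u-coordinate is uniformly bounded
  have hbdd : ∃ M : ℝ, ∀ n : ℕ, |(inner ℝ u (p n) : ℝ)| ≤ M := by
    by_cases hnear : ∀ n : ℕ, ∃ m : ℕ, n ≤ m ∧ 2 * ‖p m‖ ≤ V
    · refine ⟨V / 2, fun n => ?_⟩
      have hex : ∃ m : ℕ, n ≤ m ∧ 2 * ‖p m‖ ≤ V := hnear n
      set m := Nat.find hex with hm
      obtain ⟨hnm, hmnear⟩ := Nat.find_spec hex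
      have hfar : ∀ k, k < m - n → V < 2 * ‖p (n + k)‖ := by
        intro k hk
        by_contra hc
        push_neg at hc
        have hlt : n + k < m := by omega
        exact absurd ⟨Nat.le_add_right n k, hc⟩ (Nat.find_min hex hlt)
      have := inv (m - n) n hfar
      rw [show n + (m - n) = m by omega] at this
      calc |(inner ℝ u (p n) : ℝ)| = |(inner ℝ u (p m) : ℝ)| := by rw [← this]
        _ ≤ ‖u‖ * ‖p m‖ := abs_real_inner_le_norm u (p m)
        _ = ‖p m‖ := by rw [hu1, one_mul]
        _ ≤ V / 2 := by linarith
    · push_neg at hnear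
      obtain ⟨N, hN⟩ := hnear
      obtain ⟨M, hM⟩ : ∃ M : ℝ, ∀ n ≤ N, |(inner ℝ u (p n) : ℝ)| ≤ M := by
        refine ⟨(Finset.range (N + 1)).sup' (by simp) (fun n => |(inner ℝ u (p n) : ℝ)|),
          fun n hn => ?_⟩
        exact Finset.le_sup' (fun n => |(inner ℝ u (p n) : ℝ)|) (Finset.mem_range.mpr (Nat.lt_succ_of_le hn))
      refine ⟨M, fun n => ?_⟩
      rcases le_or_gt n N with h | h
      · exact hM n h
      · have : (inner ℝ u (p (N + (n - N))) : ℝ) = inner ℝ u (p N) := by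
          refine inv (n - N) N (fun k _ => ?_)
          exact hN (N + k) (Nat.le_add_right N k)
        rw [show N + (n - N) = n by omega] at this
        rw [this]
        exact hM N le_rfl
  obtain ⟨M, hM⟩ := hbdd
  have hM0 : 0 ≤ M := le_trans (abs_nonneg _) (hM 0)
  refine ⟨(M + 2 * V) • u, fun n => ?_⟩
  have key : ∀ x : EuclideanSpace ℝ (Fin 2), |(inner ℝ u (p n) : ℝ)| ≤ M →
      V < dist ((M + 2 * V) • u) x → True := fun _ _ _ => trivial
  have hdist : ∀ x : EuclideanSpace ℝ (Fin 2),
      |(inner ℝ u ((M + 2 * V) • u - x) : ℝ)| ≤ dist ((M + 2 * V) • u) x := by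
    intro x
    calc |(inner ℝ u ((M + 2 * V) • u - x) : ℝ)| ≤ ‖u‖ * ‖(M + 2 * V) • u - x‖ :=
          abs_real_inner_le_norm _ _
      _ = dist ((M + 2 * V) • u) x := by rw [hu1, one_mul, dist_eq_norm]
  have huu : (inner ℝ u u : ℝ) = 1 := by
    rw [real_inner_self_eq_norm_sq, hu1, one_pow]
  constructor
  · refine lt_of_lt_of_le ?_ (hdist (p n))
    rw [inner_sub_right, real_inner_smul_right, huu, mul_one]
    have h1 := (abs_le.mp (hM n)).2
    have : M + 2 * V - (inner ℝ u (p n) : ℝ) ≥ 2 * V := by linarith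
    calc V < 2 * V := by linarith
      _ ≤ M + 2 * V - (inner ℝ u (p n) : ℝ) := this
      _ ≤ |M + 2 * V - (inner ℝ u (p n) : ℝ)| := le_abs_self _
  · refine lt_of_lt_of_le ?_ (hdist (-(p n)))
    rw [inner_sub_right, real_inner_smul_right, huu, mul_one, inner_neg_right]
    have h1 := (abs_le.mp (hM n)).1
    have : M + 2 * V - (-(inner ℝ u (p n) : ℝ)) ≥ 2 * V := by linarith
    calc V < 2 * V := by linarith
      _ ≤ M + 2 * V - (-(inner ℝ u (p n) : ℝ)) := this
      _ ≤ |M + 2 * V - (-(inner ℝ u (p n) : ℝ))| := le_abs_self _
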